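/- The set M_{t_{ij}} = { x ∈ ℝ⁴ : x₁x₄ − x₂x₃ = 0 and q_{t_{ij}}(x) ≠ 0 } is a group under the generalized bicomplex product: it contains the identity e = (1,0,0,0), it is closed under the product, and every x ∈ M_{t_{ij}} has inverse x⁻¹ = (1/q_{t_{ij}}(x))·(x₁, −x₂, −x₃, x₄), which again lies in M_{t_{ij}}. -/

import Mathlib

/-- The generalized bicomplex product on ℝ⁴ with parameters α, β. -/
def gbmul (α β : ℝ) (x y : ℝ × ℝ × ℝ × ℝ) : ℝ × ℝ × ℝ × ℝ :=
  (x.1 * y.1 - α * x.2.1 * y.2.1 - β * x.2.2.1 * y.2.2.1 + α * β * x.2.2.2 * y.2.2.2,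
   x.1 * y.2.1 + x.2.1 * y.1 - β * x.2.2.1 * y.2.2.2 - β * x.2.2.2 * y.2.2.1,
   x.1 * y.2.2.1 + x.2.2.1 * y.1 - α * x.2.1 * y.2.2.2 - α * x.2.2.2 * y.2.1,
   x.1 * y.2.2.2 + x.2.2.2 * y.1 + x.2.1 * y.2.2.1 + x.2.2.1 * y.2.1)

/-- The quadratic form associated with the conjugation. -/
def qTij (α β : ℝ) (x : ℝ × ℝ × ℝ × ℝ) : ℝ := x.1 ^ 2 + α * x.2.1 ^ 2 + β * x.2.2.1 ^ 2 + α * β * x.2.2.2 ^ 2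

/-- The hyperquadric is a group under the generalized bicomplex product: it
contains the identity `(1,0,0,0)`, is closed under the product, and every
element has a two-sided inverse (again lying in the hyperquadric) given by the
scaled conjugate. -/
theorem hyperquadric_group (α β : ℝ) :
    let M : Set (ℝ × ℝ × ℝ × ℝ) :=
      {x | x.1 * x.2.2.2 - x.2.1 * x.2.2.1 = 0 ∧ qTij α β x ≠ 0}
    let e : ℝ × ℝ × ℝ × ℝ := (1, 0, 0, 0)
    e ∈ M ∧
    (∀ x ∈ M, ∀ y ∈ M, gbmul α β x y ∈ M) ∧
    (∀ x ∈ M,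
      ((qTij α β x)⁻¹ • ((x.1, -x.2.1, -x.2.2.1, x.2.2.2) : ℝ × ℝ × ℝ × ℝ)) ∈ M ∧
      gbmul α β x ((qTij α β x)⁻¹ • ((x.1, -x.2.1, -x.2.2.1, x.2.2.2) : ℝ × ℝ × ℝ × ℝ)) = e ∧
      gbmul α β ((qTij α β x)⁻¹ • ((x.1, -x.2.1, -x.2.2.1, x.2.2.2) : ℝ × ℝ × ℝ × ℝ)) x = e) := by
  intro M e
  have key : ∀ x y : ℝ × ℝ × ℝ × ℝ,
      x.1 * x.2.2.2 - x.2.1 * x.2.2.1 = 0 →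
      y.1 * y.2.2.2 - y.2.1 * y.2.2.1 = 0 →
      (gbmul α β x y).1 * (gbmul α β x y).2.2.2 -
        (gbmul α β x y).2.1 * (gbmul α β x y).2.2.1 = 0 ∧
      qTij α β (gbmul α β x y) = qTij α β x * qTij α β y := by
    intro x y hx hy
    constructor
    · simp only [gbmul]
      linear_combination (x.1 ^ 2 + α * x.2.1 ^ 2 + β * x.2.2.1 ^ 2 + α * β * x.2.2.2 ^ 2) * hy
        + (y.1 ^ 2 + α * y.2.1 ^ 2 + β * y.2.2.1 ^ 2 + α * β * y.2.2.2 ^ 2) * hx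
    · simp only [gbmul, qTij]
      linear_combination (4 * α * β * (y.1 * y.2.2.2 - y.2.1 * y.2.2.1)) * hx
  refine ⟨⟨by norm_num, by simp [qTij, e]⟩, ?_, ?_⟩
  · rintro x ⟨hx, hqx⟩ y ⟨hy, hqy⟩
    obtain ⟨h1, h2⟩ := key x y hx hy
    exact ⟨h1, by rw [h2]; exact mul_ne_zero hqx hqy⟩
  · rintro x ⟨hx, hq⟩
    set q : ℝ := qTij α β x with hqdef
    have hsmul : (q⁻¹ • ((x.1, -x.2.1, -x.2.2.1, x.2.2.2) : ℝ × ℝ × ℝ × ℝ))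
        = (q⁻¹ * x.1, q⁻¹ * -x.2.1, q⁻¹ * -x.2.2.1, q⁻¹ * x.2.2.2) := rfl
    refine ⟨⟨?_, ?_⟩, ?_, ?_⟩
    · rw [hsmul]
      dsimp only
      linear_combination (q⁻¹ * q⁻¹) * hx
    · rw [hsmul]
      have : qTij α β (q⁻¹ * x.1, q⁻¹ * -x.2.1, q⁻¹ * -x.2.2.1, q⁻¹ * x.2.2.2)
          = q⁻¹ * q⁻¹ * q := by
        simp only [qTij] at hqdef ⊢
        linear_combination (q⁻¹ * q⁻¹) * hqdef.symm
      rw [this]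
      exact mul_ne_zero (mul_ne_zero (inv_ne_zero hq) (inv_ne_zero hq)) hq
    · rw [hsmul]
      have hqq : q⁻¹ * q = 1 := inv_mul_cancel₀ hq
      simp only [gbmul, e, Prod.mk.injEq]
      refine ⟨?_, ?_, ?_, ?_⟩
      · simp only [qTij] at hqdef
        linear_combination q⁻¹ * hqdef.symm + hqq
      · ring
      · ring
      · linear_combination q⁻¹ * 2 * hx
    · rw [hsmul]
      have hqq : q⁻¹ * q = 1 := inv_mul_cancel₀ hq
      simp only [gbmul, e, Prod.mk.injEq]
      refine ⟨?_, ?_, ?_, ?_⟩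
      · simp only [qTij] at hqdef
        linear_combination q⁻¹ * hqdef.symm + hqq
      · ring
      · ring
      · linear_combination q⁻¹ * 2 * hx
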